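/- Let γ, D > 0, c ∈ ℝ, let ν̃(c) < 0 < μ̃(c) be the roots of Dz² − cz − γ = 0, and define k̃₁(s) := (c² + 4Dγ)^{−1/2}·e^{ν̃(c)s} for s ≥ 0 and k̃₁(s) := (c² + 4Dγ)^{−1/2}·e^{μ̃(c)s} for s < 0. Assume (H0) for K and (H1) for g, and let φ : ℝ → ℝ₊ be a bounded continuous function with lim_{t→−∞} φ(t) = 0. Define (ℋφ)(t) := g(φ(t)) − ∫₀^∞∫_ℝ K(s,w)·g(φ(t − cs − w)) dw ds and ψ(t) := ∫_ℝ k̃₁(t−s)·(ℋφ)(s) ds. Then ψ is well defined and bounded, ψ is twice continuously differentiable and satisfies D·ψ''(t) − c·ψ'(t) − γ·ψ(t) + (ℋφ)(t) = 0 for all t ∈ ℝ, and lim_{t→−∞} ψ(t) = 0. -/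

import Mathlib

set_option maxHeartbeats 1000000


open MeasureTheory Filter Set

noncomputable section

/-- the negative root `ν̃(c)` of `Dz² - cz - γ = 0`. -/
def nuTilde (D γ c : ℝ) : ℝ := (c - Real.sqrt (c ^ 2 + 4 * D * γ)) / (2 * D)

/-- the positive root `μ̃(c)` of `Dz² - cz - γ = 0`. -/
def muTilde (D γ c : ℝ) : ℝ := (c + Real.sqrt (c ^ 2 + 4 * D * γ)) / (2 * D)

/-- the Green's function kernel `k̃₁` of `D y'' - c y' - γ y`. -/
def k1Tilde (D γ c : ℝ) (s : ℝ) : ℝ :=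
  if 0 ≤ s then Real.exp (nuTilde D γ c * s) / Real.sqrt (c ^ 2 + 4 * D * γ)
  else Real.exp (muTilde D γ c * s) / Real.sqrt (c ^ 2 + 4 * D * γ)

/-- `(ℋφ)(t) = g(φ(t)) - ∫₀^∞∫_ℝ K(s,w) g(φ(t - cs - w)) dw ds`. -/
def Hop (K : ℝ → ℝ → ℝ) (g : ℝ → ℝ) (c : ℝ) (φ : ℝ → ℝ) (t : ℝ) : ℝ :=
  g (φ t) - ∫ s in Set.Ioi (0:ℝ), ∫ w : ℝ, K s w * g (φ (t - c * s - w))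

/-- `ψ(t) = ∫_ℝ k̃₁(t - s) (ℋφ)(s) ds`. -/
def psiImm (K : ℝ → ℝ → ℝ) (g : ℝ → ℝ) (D γ c : ℝ) (φ : ℝ → ℝ) (t : ℝ) : ℝ :=
  ∫ s : ℝ, k1Tilde D γ c (t - s) * Hop K g c φ s

namespace ImmAux

variable {D γ c : ℝ}

lemma delta_pos (hD : 0 < D) (hγ : 0 < γ) : 0 < c ^ 2 + 4 * D * γ := by positivity

lemma r_pos (hD : 0 < D) (hγ : 0 < γ) : 0 < Real.sqrt (c ^ 2 + 4 * D * γ) :=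
  Real.sqrt_pos.mpr (delta_pos hD hγ)

lemma r_sq (hD : 0 < D) (hγ : 0 < γ) :
    Real.sqrt (c ^ 2 + 4 * D * γ) ^ 2 = c ^ 2 + 4 * D * γ :=
  Real.sq_sqrt (delta_pos hD hγ).le

lemma nu_neg (hD : 0 < D) (hγ : 0 < γ) : nuTilde D γ c < 0 := by
  have h1 := r_pos (c := c) hD hγ
  have h2 := r_sq (c := c) hD hγ
  have hc : c < Real.sqrt (c ^ 2 + 4 * D * γ) := by nlinarith
  exact div_neg_of_neg_of_pos (by linarith) (by linarith)

lemma mu_pos (hD : 0 < D) (hγ : 0 < γ) : 0 < muTilde D γ c := by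
  have h1 := r_pos (c := c) hD hγ
  have h2 := r_sq (c := c) hD hγ
  have hc : -c < Real.sqrt (c ^ 2 + 4 * D * γ) := by nlinarith
  exact div_pos (by linarith) (by linarith)

lemma nu_root (hD : 0 < D) (hγ : 0 < γ) :
    D * nuTilde D γ c ^ 2 - c * nuTilde D γ c - γ = 0 := by
  have h2 := r_sq (c := c) hD hγ
  unfold nuTilde
  field_simp
  rw [show c ^ 2 + D * 4 * γ = c ^ 2 + 4 * D * γ by ring]
  nlinarith [h2]

lemma mu_root (hD : 0 < D) (hγ : 0 < γ) :
    D * muTilde D γ c ^ 2 - c * muTilde D γ c - γ = 0 := by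
  have h2 := r_sq (c := c) hD hγ
  unfold muTilde
  field_simp
  rw [show c ^ 2 + D * 4 * γ = c ^ 2 + 4 * D * γ by ring]
  nlinarith [h2]

lemma D_nu_sub_mu (hD : 0 < D) (hγ : 0 < γ) :
    D * (nuTilde D γ c - muTilde D γ c) = -Real.sqrt (c ^ 2 + 4 * D * γ) := by
  unfold nuTilde muTilde
  field_simp
  ring

lemma k1_nonneg (hD : 0 < D) (hγ : 0 < γ) (s : ℝ) : 0 ≤ k1Tilde D γ c s := by
  have h1 := r_pos (c := c) hD hγ
  unfold k1Tilde
  split <;> positivity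

/-- exp(b·s) is integrable on `Iic t` when `b > 0`. -/
lemma exp_integrableOn_Iic (t : ℝ) {b : ℝ} (hb : 0 < b) :
    IntegrableOn (fun s : ℝ => Real.exp (b * s)) (Iic t) := by
  have A : MeasurableEmbedding (fun x : ℝ => -x) :=
    (Homeomorph.neg ℝ).isClosedEmbedding.measurableEmbedding
  have h : IntegrableOn (fun s : ℝ => Real.exp (-b * s)) (Ici (-t)) := by
    rw [integrableOn_Ici_iff_integrableOn_Ioi]
    exact exp_neg_integrableOn_Ioi _ hb
  have hmap := (A.integrableOn_map_iff
      (f := fun s : ℝ => Real.exp (b * s)) (μ := volume) (s := Iic t))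
  rw [Measure.map_neg_eq_self] at hmap
  rw [hmap, show ((fun x : ℝ => -x) ⁻¹' Iic t) = Ici (-t) by ext x; simp]
  refine h.congr_fun (fun x _ => ?_) measurableSet_Ici
  simp [Function.comp, neg_mul, mul_neg]

lemma integrableOn_comp_neg_Iic {f : ℝ → ℝ} {t : ℝ} (h : IntegrableOn f (Ioi (-t))) :
    IntegrableOn (fun s => f (-s)) (Iic t) := by
  have A : MeasurableEmbedding (fun x : ℝ => -x) :=
    (Homeomorph.neg ℝ).isClosedEmbedding.measurableEmbedding
  have hmap := (A.integrableOn_map_iff (f := f) (μ := volume) (s := Ioi (-t)))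
  rw [Measure.map_neg_eq_self] at hmap
  have h2 := hmap.mp h
  rw [show ((fun x : ℝ => -x) ⁻¹' Ioi (-t)) = Iio t by ext x; simp] at h2
  rw [integrableOn_Iic_iff_integrableOn_Iio]
  exact h2

lemma k1_integrable (hD : 0 < D) (hγ : 0 < γ) : Integrable (k1Tilde D γ c) := by
  have h1 := r_pos (c := c) hD hγ
  have hν := nu_neg (c := c) hD hγ
  have hμ := mu_pos (c := c) hD hγ
  have hIci : IntegrableOn (k1Tilde D γ c) (Ici 0) := by
    have h : IntegrableOn (fun s : ℝ => Real.exp (nuTilde D γ c * s) / Real.sqrt (c ^ 2 + 4 * D * γ)) (Ici (0:ℝ)) := by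
      rw [integrableOn_Ici_iff_integrableOn_Ioi]
      have := (exp_neg_integrableOn_Ioi (0:ℝ) (show 0 < -nuTilde D γ c by linarith)).div_const
        (Real.sqrt (c ^ 2 + 4 * D * γ))
      simp at this
      exact this
    refine h.congr_fun (fun x hx => ?_) measurableSet_Ici
    rw [k1Tilde, if_pos (show (0:ℝ) ≤ x from hx)]
  have hIio : IntegrableOn (k1Tilde D γ c) (Iio 0) := by
    have h : IntegrableOn (fun s : ℝ => Real.exp (muTilde D γ c * s) / Real.sqrt (c ^ 2 + 4 * D * γ)) (Iio (0:ℝ)) := by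
      have : IntegrableOn (fun s : ℝ => Real.exp (muTilde D γ c * s) / Real.sqrt (c ^ 2 + 4 * D * γ)) (Iic (0:ℝ)) :=
        (exp_integrableOn_Iic (0:ℝ) hμ).div_const (Real.sqrt (c ^ 2 + 4 * D * γ))
      exact this.mono_set Iio_subset_Iic_self
    refine h.congr_fun (fun x hx => ?_) measurableSet_Iio
    rw [k1Tilde, if_neg (not_le.mpr hx)]
  have := hIio.union hIci
  rwa [Iio_union_Ici, integrableOn_univ] at this

lemma k1_measurable : Measurable (k1Tilde D γ c) := by
  unfold k1Tilde
  exact Measurable.ite measurableSet_Ici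
    ((Real.continuous_exp.comp (continuous_const.mul continuous_id)).div_const _).measurable
    ((Real.continuous_exp.comp (continuous_const.mul continuous_id)).div_const _).measurable

lemma hasDerivAt_exp_mul (a t : ℝ) :
    HasDerivAt (fun t : ℝ => Real.exp (a * t)) (a * Real.exp (a * t)) t := by
  have := ((hasDerivAt_id t).const_mul a).exp
  simpa [mul_comm] using this

/-- derivative of `t ↦ ∫_{Iic t} f`. -/
lemma hasDerivAt_Iic_integral {f : ℝ → ℝ} (hf : Continuous f)
    (hint : ∀ t : ℝ, IntegrableOn f (Iic t)) (t : ℝ) :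
    HasDerivAt (fun u => ∫ s in Iic u, f s) (f t) t := by
  have key : ∀ u : ℝ, ∫ s in Iic u, f s = (∫ s in Iic 0, f s) + ∫ s in (0:ℝ)..u, f s := by
    intro u
    rw [← intervalIntegral.integral_Iic_sub_Iic (hint 0) (hint u)]
    ring
  have hd : HasDerivAt (fun u : ℝ => (∫ s in Iic 0, f s) + ∫ s in (0:ℝ)..u, f s) (f t) t := by
    apply HasDerivAt.const_add
    apply intervalIntegral.integral_hasDerivAt_right
    · apply IntegrableOn.intervalIntegrable
      refine (hint (max 0 t)).mono_set ?_
      intro x hx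
      rcases Set.mem_uIcc.mp hx with h | h
      · exact le_trans h.2 (le_max_right _ _)
      · exact le_trans h.2 (le_max_left _ _)
    · exact hf.stronglyMeasurableAtFilter _ _
    · exact hf.continuousAt
  simpa only [← key] using hd

/-- Main workhorse: all conclusions, for an abstract continuous bounded `H` vanishing at `-∞`. -/
lemma main (hD : 0 < D) (hγ : 0 < γ) {H : ℝ → ℝ} {C2 : ℝ}
    (hHcont : Continuous H) (hHbdd : ∀ t, |H t| ≤ C2)
    (hHbot : Tendsto H atBot (nhds 0)) :
    (∀ t : ℝ, Integrable (fun s => k1Tilde D γ c (t - s) * H s)) ∧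
    (∃ M, ∀ t, |(∫ s : ℝ, k1Tilde D γ c (t - s) * H s)| ≤ M) ∧
    ContDiff ℝ 2 (fun t => ∫ s : ℝ, k1Tilde D γ c (t - s) * H s) ∧
    (∀ t : ℝ,
      D * deriv (deriv (fun t => ∫ s : ℝ, k1Tilde D γ c (t - s) * H s)) t
        - c * deriv (fun t => ∫ s : ℝ, k1Tilde D γ c (t - s) * H s) t
        - γ * (∫ s : ℝ, k1Tilde D γ c (t - s) * H s) + H t = 0) ∧
    Tendsto (fun t => ∫ s : ℝ, k1Tilde D γ c (t - s) * H s) atBot (nhds 0) := by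
  obtain ⟨r, hrdef⟩ : ∃ r, r = Real.sqrt (c ^ 2 + 4 * D * γ) := ⟨_, rfl⟩
  obtain ⟨ν, hνdef⟩ : ∃ ν, ν = nuTilde D γ c := ⟨_, rfl⟩
  obtain ⟨μ', hμdef⟩ : ∃ μ', μ' = muTilde D γ c := ⟨_, rfl⟩
  have hr : 0 < r := hrdef ▸ r_pos hD hγ
  have hr0 : r ≠ 0 := ne_of_gt hr
  have hν : ν < 0 := hνdef ▸ nu_neg hD hγ
  have hμ : 0 < μ' := hμdef ▸ mu_pos hD hγ
  have hνroot : D * ν ^ 2 - c * ν - γ = 0 := by rw [hνdef]; exact nu_root hD hγ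
  have hμroot : D * μ' ^ 2 - c * μ' - γ = 0 := by rw [hμdef]; exact mu_root hD hγ
  have hdiff : D * (ν - μ') = -r := by rw [hνdef, hμdef, hrdef]; exact D_nu_sub_mu hD hγ
  have hk1pos : ∀ x : ℝ, 0 ≤ x → k1Tilde D γ c x = Real.exp (ν * x) / r := by
    intro x hx; rw [k1Tilde, if_pos hx, hνdef, hrdef]
  have hk1neg : ∀ x : ℝ, x < 0 → k1Tilde D γ c x = Real.exp (μ' * x) / r := by
    intro x hx; rw [k1Tilde, if_neg (not_le.mpr hx), hμdef, hrdef]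
  have hC2 : 0 ≤ C2 := le_trans (abs_nonneg _) (hHbdd 0)
  -- the two half-line primitives
  set A : ℝ → ℝ := fun u => ∫ s in Iic u, Real.exp (-ν * s) * H s with hA
  set B : ℝ → ℝ := fun u => ∫ s in Ioi u, Real.exp (-μ' * s) * H s with hB
  have contν : Continuous fun s : ℝ => Real.exp (-ν * s) * H s := by fun_prop
  have contμ : Continuous fun s : ℝ => Real.exp (-μ' * s) * H s := by fun_prop
  have hAint : ∀ t : ℝ, IntegrableOn (fun s => Real.exp (-ν * s) * H s) (Iic t) := by
    intro t
    refine Integrable.mono' ((exp_integrableOn_Iic t (show 0 < -ν by linarith)).const_mul C2)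
      contν.aestronglyMeasurable (ae_of_all _ fun s => ?_)
    rw [Real.norm_eq_abs, abs_mul, abs_of_nonneg (Real.exp_pos _).le]
    calc Real.exp (-ν * s) * |H s| ≤ Real.exp (-ν * s) * C2 :=
          mul_le_mul_of_nonneg_left (hHbdd s) (Real.exp_pos _).le
      _ = C2 * Real.exp (-ν * s) := mul_comm _ _
  have hBint : ∀ t : ℝ, IntegrableOn (fun s => Real.exp (-μ' * s) * H s) (Ioi t) := by
    intro t
    refine Integrable.mono' ((exp_neg_integrableOn_Ioi t hμ).const_mul C2)
      contμ.aestronglyMeasurable (ae_of_all _ fun s => ?_)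
    rw [Real.norm_eq_abs, abs_mul, abs_of_nonneg (Real.exp_pos _).le]
    calc Real.exp (-μ' * s) * |H s| ≤ Real.exp (-μ' * s) * C2 :=
          mul_le_mul_of_nonneg_left (hHbdd s) (Real.exp_pos _).le
      _ = C2 * Real.exp (-μ' * s) := mul_comm _ _
  have hAder : ∀ t : ℝ, HasDerivAt A (Real.exp (-ν * t) * H t) t :=
    hasDerivAt_Iic_integral contν hAint
  have hBder : ∀ t : ℝ, HasDerivAt B (-(Real.exp (-μ' * t) * H t)) t := by
    have hBeq : ∀ u : ℝ, B u = ∫ s in Iic (-u), Real.exp (-μ' * -s) * H (-s) := by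
      intro u
      rw [integral_comp_neg_Iic (-u) (fun s => Real.exp (-μ' * s) * H s), neg_neg]
    have hBtilde : ∀ v : ℝ,
        HasDerivAt (fun v => ∫ s in Iic v, Real.exp (-μ' * -s) * H (-s))
          (Real.exp (-μ' * -v) * H (-v)) v := by
      refine hasDerivAt_Iic_integral (by fun_prop) (fun v => ?_)
      exact integrableOn_comp_neg_Iic (f := fun s => Real.exp (-μ' * s) * H s) (hBint (-v))
    intro t
    have h1 := (hBtilde (-t)).comp t (hasDerivAt_neg t)
    have h2 : HasDerivAt (fun u : ℝ => ∫ s in Iic (-u), Real.exp (-μ' * -s) * H (-s))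
        (-(Real.exp (-μ' * t) * H t)) t := by
      simpa [Function.comp_def, neg_neg, mul_neg_one] using h1
    exact h2.congr_of_eventuallyEq (Eventually.of_forall hBeq)
  -- splitting ψ
  have hsplit1 : ∀ t : ℝ, IntegrableOn (fun s => k1Tilde D γ c (t - s) * H s) (Iic t) := by
    intro t
    refine IntegrableOn.congr_fun ((hAint t).const_mul (Real.exp (ν * t) / r))
      (fun s hs => ?_) measurableSet_Iic
    rw [hk1pos _ (sub_nonneg.mpr hs), show ν * (t - s) = ν * t + -ν * s by ring, Real.exp_add]
    ring
  have hsplit2 : ∀ t : ℝ, IntegrableOn (fun s => k1Tilde D γ c (t - s) * H s) (Ioi t) := by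
    intro t
    refine IntegrableOn.congr_fun ((hBint t).const_mul (Real.exp (μ' * t) / r))
      (fun s hs => ?_) measurableSet_Ioi
    rw [hk1neg _ (by simp only [mem_Ioi] at hs; linarith),
      show μ' * (t - s) = μ' * t + -μ' * s by ring, Real.exp_add]
    ring
  have hwell : ∀ t : ℝ, Integrable (fun s => k1Tilde D γ c (t - s) * H s) := by
    intro t
    have := (hsplit1 t).union (hsplit2 t)
    rw [Iic_union_Ioi] at this
    exact integrableOn_univ.mp this
  have ψeq : ∀ t : ℝ, (∫ s : ℝ, k1Tilde D γ c (t - s) * H s)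
      = (Real.exp (ν * t) * A t + Real.exp (μ' * t) * B t) / r := by
    intro t
    rw [← intervalIntegral.integral_Iic_add_Ioi (hsplit1 t) (hsplit2 t)]
    have e1 : (∫ s in Iic t, k1Tilde D γ c (t - s) * H s)
        = Real.exp (ν * t) / r * A t := by
      simp only [hA]
      rw [← integral_const_mul]
      refine setIntegral_congr_fun measurableSet_Iic (fun s hs => ?_)
      rw [hk1pos _ (sub_nonneg.mpr hs), show ν * (t - s) = ν * t + -ν * s by ring, Real.exp_add]
      ring
    have e2 : (∫ s in Ioi t, k1Tilde D γ c (t - s) * H s)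
        = Real.exp (μ' * t) / r * B t := by
      simp only [hB]
      rw [← integral_const_mul]
      refine setIntegral_congr_fun measurableSet_Ioi (fun s hs => ?_)
      rw [hk1neg _ (by simp only [mem_Ioi] at hs; linarith),
        show μ' * (t - s) = μ' * t + -μ' * s by ring, Real.exp_add]
      ring
    rw [e1, e2]
    ring
  -- boundedness via convolution form
  have hconv_eq : ∀ t : ℝ, (∫ s : ℝ, k1Tilde D γ c (t - s) * H s)
      = ∫ u : ℝ, k1Tilde D γ c u * H (t - u) := by
    intro t
    have h := integral_sub_left_eq_self (fun u => k1Tilde D γ c u * H (t - u)) volume t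
    simp only [sub_sub_cancel] at h
    exact h
  have hk1int := k1_integrable (c := c) hD hγ
  have hk1meas := k1_measurable (D := D) (γ := γ) (c := c)
  have hk1nn := k1_nonneg (c := c) hD hγ
  have hbdd_norm : ∀ t u : ℝ, ‖k1Tilde D γ c u * H (t - u)‖ ≤ k1Tilde D γ c u * C2 := by
    intro t u
    rw [Real.norm_eq_abs, abs_mul, abs_of_nonneg (hk1nn u)]
    exact mul_le_mul_of_nonneg_left (hHbdd _) (hk1nn u)
  have hconv_meas : ∀ t : ℝ, AEStronglyMeasurable (fun u => k1Tilde D γ c u * H (t - u)) volume := by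
    intro t
    exact (hk1meas.mul (hHcont.measurable.comp (measurable_const.sub measurable_id))).aestronglyMeasurable
  have hbdd : ∀ t : ℝ, |(∫ s : ℝ, k1Tilde D γ c (t - s) * H s)|
      ≤ (∫ s : ℝ, k1Tilde D γ c s) * C2 := by
    intro t
    rw [hconv_eq t, ← integral_mul_const]
    exact norm_integral_le_of_norm_le (hk1int.mul_const C2) (ae_of_all _ (hbdd_norm t))
  -- vanishing at -∞
  have hbot : Tendsto (fun t => ∫ s : ℝ, k1Tilde D γ c (t - s) * H s) atBot (nhds 0) := by
    have h0 : Tendsto (fun t : ℝ => ∫ u : ℝ, k1Tilde D γ c u * H (t - u)) atBot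
        (nhds (∫ _ : ℝ, (0:ℝ))) := by
      apply tendsto_integral_filter_of_dominated_convergence (fun u => k1Tilde D γ c u * C2)
        (Eventually.of_forall hconv_meas)
        (Eventually.of_forall fun t => ae_of_all _ (hbdd_norm t))
        (hk1int.mul_const C2)
      apply ae_of_all
      intro u
      have h1 : Tendsto (fun t : ℝ => t - u) atBot atBot := by
        simp only [sub_eq_add_neg]
        exact tendsto_atBot_add_const_right _ _ tendsto_id
      have := (hHbot.comp h1).const_mul (k1Tilde D γ c u)
      simpa using this
    simp only [integral_zero] at h0
    exact Tendsto.congr (fun t => (hconv_eq t).symm) h0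
  -- derivatives
  have hψ1der : ∀ t : ℝ, HasDerivAt (fun t => (Real.exp (ν * t) * A t + Real.exp (μ' * t) * B t) / r)
      ((ν * (Real.exp (ν * t) * A t) + μ' * (Real.exp (μ' * t) * B t)) / r) t := by
    intro t
    have h := (((hasDerivAt_exp_mul ν t).mul (hAder t)).add
      ((hasDerivAt_exp_mul μ' t).mul (hBder t))).div_const r
    refine h.congr_deriv ?_
    have e1 : Real.exp (ν * t) * Real.exp (-ν * t) = 1 := by
      rw [← Real.exp_add]; simp
    have e2 : Real.exp (μ' * t) * Real.exp (-μ' * t) = 1 := by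
      rw [← Real.exp_add]; simp
    linear_combination (H t / r) * e1 + (-(H t) / r) * e2
  have hψ2der : ∀ t : ℝ, HasDerivAt
      (fun t => (ν * (Real.exp (ν * t) * A t) + μ' * (Real.exp (μ' * t) * B t)) / r)
      ((ν * (ν * (Real.exp (ν * t) * A t)) + μ' * (μ' * (Real.exp (μ' * t) * B t))
        + (ν - μ') * H t) / r) t := by
    intro t
    have h := ((((hasDerivAt_exp_mul ν t).mul (hAder t)).const_mul ν).add
      (((hasDerivAt_exp_mul μ' t).mul (hBder t)).const_mul μ')).div_const r
    refine h.congr_deriv ?_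
    have e1 : Real.exp (ν * t) * Real.exp (-ν * t) = 1 := by
      rw [← Real.exp_add]; simp
    have e2 : Real.exp (μ' * t) * Real.exp (-μ' * t) = 1 := by
      rw [← Real.exp_add]; simp
    linear_combination ((ν * H t) / r) * e1 + (-(μ' * H t) / r) * e2
  have hψfun_eq : (fun t => ∫ s : ℝ, k1Tilde D γ c (t - s) * H s)
      = fun t => (Real.exp (ν * t) * A t + Real.exp (μ' * t) * B t) / r := funext ψeq
  have hderiv1 : deriv (fun t => (Real.exp (ν * t) * A t + Real.exp (μ' * t) * B t) / r)
      = fun t => (ν * (Real.exp (ν * t) * A t) + μ' * (Real.exp (μ' * t) * B t)) / r :=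
    funext fun t => (hψ1der t).deriv
  have hderiv2 : deriv (fun t => (ν * (Real.exp (ν * t) * A t) + μ' * (Real.exp (μ' * t) * B t)) / r)
      = fun t => (ν * (ν * (Real.exp (ν * t) * A t)) + μ' * (μ' * (Real.exp (μ' * t) * B t))
        + (ν - μ') * H t) / r :=
    funext fun t => (hψ2der t).deriv
  have hcontA : Continuous A := continuous_iff_continuousAt.mpr fun t => (hAder t).continuousAt
  have hcontB : Continuous B := continuous_iff_continuousAt.mpr fun t => (hBder t).continuousAt
  have hcontψ2 : Continuous (fun t => (ν * (ν * (Real.exp (ν * t) * A t))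
      + μ' * (μ' * (Real.exp (μ' * t) * B t)) + (ν - μ') * H t) / r) := by fun_prop
  have hsmooth : ContDiff ℝ 2 (fun t => ∫ s : ℝ, k1Tilde D γ c (t - s) * H s) := by
    rw [hψfun_eq]
    rw [show (2 : WithTop ℕ∞) = 1 + 1 by norm_num, contDiff_succ_iff_deriv]
    refine ⟨fun t => (hψ1der t).differentiableAt, by simp, ?_⟩
    rw [hderiv1]
    rw [show (1 : WithTop ℕ∞) = 0 + 1 by norm_num, contDiff_succ_iff_deriv]
    refine ⟨fun t => (hψ2der t).differentiableAt, by simp, ?_⟩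
    rw [hderiv2, contDiff_zero]
    exact hcontψ2
  refine ⟨hwell, ⟨(∫ s : ℝ, k1Tilde D γ c s) * C2, hbdd⟩, hsmooth, ?_, hbot⟩
  intro t
  rw [hψfun_eq, hderiv1, hderiv2]
  rw [ψeq t]
  have hrr : r * r⁻¹ = 1 := mul_inv_cancel₀ hr0
  linear_combination ((Real.exp (ν * t) * A t) / r) * hνroot
    + ((Real.exp (μ' * t) * B t) / r) * hμroot + (H t / r) * hdiff + (-(H t)) * hrr

end ImmAux

/-- Recovery of the immature component of the population system. -/
theorem immature_component
    (K : ℝ → ℝ → ℝ) (g : ℝ → ℝ) (g'0 D γ c : ℝ) (φ : ℝ → ℝ)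
    (hD : 0 < D) (hγ : 0 < γ)
    -- (H0)
    (hKmeas : Measurable fun x : ℝ × ℝ => K x.1 x.2)
    (hKnn : ∀ s w, 0 ≤ K s w)
    (hKint : IntegrableOn (fun x : ℝ × ℝ => K x.1 x.2) (Set.Ioi 0 ×ˢ Set.univ))
    (hKnorm : (∫ s in Set.Ioi (0:ℝ), ∫ w : ℝ, K s w) = 1)
    -- (H1)
    (hgc : ContinuousOn g (Set.Ici 0))
    (hgnn : ∀ s, 0 ≤ s → 0 ≤ g s)
    (hg0 : g 0 = 0)
    (hgpos : ∀ s, 0 < s → 0 < g s)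
    (hgd : HasDerivWithinAt g g'0 (Set.Ici 0) 0)
    -- φ is bounded, continuous, nonnegative, vanishing at -∞
    (hφc : Continuous φ)
    (hφnn : ∀ t, 0 ≤ φ t)
    (hφbdd : ∃ M, ∀ t, |φ t| ≤ M)
    (hφbot : Tendsto φ atBot (nhds 0)) :
    -- ψ is well defined and bounded
    (∀ t : ℝ, Integrable (fun s => k1Tilde D γ c (t - s) * Hop K g c φ s)) ∧
    (∃ M, ∀ t, |psiImm K g D γ c φ t| ≤ M) ∧
    -- ψ ∈ C² and solves the immature profile equation
    ContDiff ℝ 2 (psiImm K g D γ c φ) ∧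
    (∀ t : ℝ, D * deriv (deriv (psiImm K g D γ c φ)) t - c * deriv (psiImm K g D γ c φ) t -
        γ * psiImm K g D γ c φ t + Hop K g c φ t = 0) ∧
    -- ψ vanishes at -∞
    Tendsto (psiImm K g D γ c φ) atBot (nhds 0) := by
  classical
  -- bounds on φ and g ∘ φ
  obtain ⟨M, hM⟩ := hφbdd
  have hφM : ∀ t, φ t ∈ Icc (0:ℝ) M := fun t => ⟨hφnn t, le_trans (le_abs_self _) (hM t)⟩
  obtain ⟨C, hC⟩ := (isCompact_Icc (a := (0:ℝ)) (b := M)).exists_bound_of_continuousOn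
    (hgc.mono (fun x hx => hx.1))
  have hgφbdd : ∀ t, |g (φ t)| ≤ C := fun t => hC _ (hφM t)
  have hC0 : 0 ≤ C := le_trans (abs_nonneg _) (hgφbdd 0)
  have hgφcont : Continuous fun t => g (φ t) := hgc.comp_continuous hφc hφnn
  have hgφbot : Tendsto (fun t => g (φ t)) atBot (nhds 0) := by
    have h1 : Tendsto φ atBot (nhdsWithin 0 (Ici 0)) :=
      tendsto_nhdsWithin_iff.mpr ⟨hφbot, Eventually.of_forall hφnn⟩
    have h2 := ((hgc 0 self_mem_Ici).tendsto).comp h1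
    simpa [hg0, Function.comp_def] using h2
  -- product-measure setting for the double integral
  set π : Measure (ℝ × ℝ) := (volume : Measure (ℝ × ℝ)).restrict (Ioi 0 ×ˢ univ) with hπdef
  have hπ : ((volume : Measure ℝ).restrict (Ioi 0)).prod (volume : Measure ℝ) = π := by
    rw [hπdef, Measure.volume_eq_prod, ← Measure.prod_restrict, Measure.restrict_univ]
  have hKπ : Integrable (fun x : ℝ × ℝ => K x.1 x.2) π := hKint
  have hconv : ∀ f : ℝ → ℝ → ℝ, Integrable (Function.uncurry f) π →
      (∫ s in Ioi (0:ℝ), ∫ w : ℝ, f s w) = ∫ x : ℝ × ℝ, f x.1 x.2 ∂π := by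
    intro f hf
    rw [← hπ] at hf ⊢
    exact integral_integral hf
  have hFmeas : ∀ t : ℝ, AEStronglyMeasurable
      (fun x : ℝ × ℝ => K x.1 x.2 * g (φ (t - c * x.1 - x.2))) π := by
    intro t
    apply Measurable.aestronglyMeasurable
    exact hKmeas.mul (hgφcont.measurable.comp
      ((measurable_const.sub (measurable_fst.const_mul c)).sub measurable_snd))
  have hFbound : ∀ t : ℝ, ∀ x : ℝ × ℝ,
      ‖K x.1 x.2 * g (φ (t - c * x.1 - x.2))‖ ≤ C * K x.1 x.2 := by
    intro t x
    rw [Real.norm_eq_abs, abs_mul, abs_of_nonneg (hKnn _ _)]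
    calc K x.1 x.2 * |g (φ (t - c * x.1 - x.2))| ≤ K x.1 x.2 * C :=
          mul_le_mul_of_nonneg_left (hgφbdd _) (hKnn _ _)
      _ = C * K x.1 x.2 := mul_comm _ _
  have hboundInt : Integrable (fun x : ℝ × ℝ => C * K x.1 x.2) π := hKπ.const_mul C
  have hFint : ∀ t : ℝ, Integrable (fun x : ℝ × ℝ => K x.1 x.2 * g (φ (t - c * x.1 - x.2))) π :=
    fun t => Integrable.mono' hboundInt (hFmeas t) (ae_of_all _ (hFbound t))
  have hHopEq : ∀ t : ℝ, Hop K g c φ t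
      = g (φ t) - ∫ x : ℝ × ℝ, K x.1 x.2 * g (φ (t - c * x.1 - x.2)) ∂π := by
    intro t
    unfold Hop
    rw [hconv (fun s w => K s w * g (φ (t - c * s - w))) (hFint t)]
  have hKnorm' : (∫ x : ℝ × ℝ, K x.1 x.2 ∂π) = 1 := by
    rw [← hconv (fun s w => K s w) hKπ]
    exact hKnorm
  have hIbdd : ∀ t : ℝ, |∫ x : ℝ × ℝ, K x.1 x.2 * g (φ (t - c * x.1 - x.2)) ∂π| ≤ C := by
    intro t
    have h := norm_integral_le_of_norm_le hboundInt (ae_of_all _ (hFbound t))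
    rwa [integral_const_mul, hKnorm', mul_one] at h
  have hIcont : Continuous fun t : ℝ => ∫ x : ℝ × ℝ, K x.1 x.2 * g (φ (t - c * x.1 - x.2)) ∂π := by
    rw [continuous_iff_continuousAt]
    intro t
    apply continuousAt_of_dominated (Eventually.of_forall hFmeas)
      (Eventually.of_forall fun t' => ae_of_all _ (hFbound t')) hboundInt
    apply ae_of_all
    intro x
    exact (continuous_const.mul (hgφcont.comp
      ((continuous_id.sub continuous_const).sub continuous_const))).continuousAt
  have hIbot : Tendsto (fun t : ℝ => ∫ x : ℝ × ℝ, K x.1 x.2 * g (φ (t - c * x.1 - x.2)) ∂π)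
      atBot (nhds 0) := by
    have h0 := tendsto_integral_filter_of_dominated_convergence (μ := π) (l := atBot)
      (F := fun (t : ℝ) (x : ℝ × ℝ) => K x.1 x.2 * g (φ (t - c * x.1 - x.2)))
      (f := fun _ => (0:ℝ)) (bound := fun x : ℝ × ℝ => C * K x.1 x.2)
      (Eventually.of_forall hFmeas) (Eventually.of_forall fun t => ae_of_all _ (hFbound t))
      hboundInt ?_
    · rw [integral_zero] at h0
      exact h0
    · apply ae_of_all
      intro x
      have h1 : Tendsto (fun t : ℝ => t - c * x.1 - x.2) atBot atBot := by
        simp only [sub_eq_add_neg, add_assoc]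
        exact tendsto_atBot_add_const_right _ _ tendsto_id
      have h2 := (hgφbot.comp h1).const_mul (K x.1 x.2)
      simp only [Function.comp, mul_zero] at h2
      exact h2
  -- properties of Hop
  have hHopfun : Hop K g c φ
      = fun t => g (φ t) - ∫ x : ℝ × ℝ, K x.1 x.2 * g (φ (t - c * x.1 - x.2)) ∂π :=
    funext hHopEq
  have hHcont : Continuous (Hop K g c φ) := by
    rw [hHopfun]; exact hgφcont.sub hIcont
  have hHbdd : ∀ t, |Hop K g c φ t| ≤ C + C := by
    intro t
    rw [hHopEq t]
    calc |g (φ t) - ∫ x : ℝ × ℝ, K x.1 x.2 * g (φ (t - c * x.1 - x.2)) ∂π|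
        ≤ |g (φ t)| + |∫ x : ℝ × ℝ, K x.1 x.2 * g (φ (t - c * x.1 - x.2)) ∂π| := abs_sub _ _
      _ ≤ C + C := add_le_add (hgφbdd t) (hIbdd t)
  have hHbot : Tendsto (Hop K g c φ) atBot (nhds 0) := by
    rw [hHopfun]
    have := hgφbot.sub hIbot
    simpa using this
  exact ImmAux.main hD hγ hHcont hHbdd hHbot
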